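/- Let λ₄, λ₅, λ₆, λ₇ ∈ ℚ. Define f₁, f₂ : ℤ → ℚ by f₁(c) = 2⁷c⁷·(−3λ₆ − 9λ₇) + 2⁵c⁵·(−24λ₅ − 96λ₆ − 240λ₇) + 2³c³·(−28λ₄ − 232λ₅ − 580λ₆ − 1056λ₇) and f₂(c) = 2³c³·(−7λ₄ − 4λ₅ − 7λ₆ + 52λ₇) + 2²c²·(42λ₅ + 66λ₆ + 48λ₇) + 2c·(224λ₅ + 352λ₆ + 256λ₇). If both f₁ and f₂ are bounded in absolute value on ℤ, then λ₄ = λ₅ = λ₆ = λ₇ = 0. -/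

import Mathlib

namespace HW18

lemma abs_zero_of_mul_nat_le {a D : ℝ} (h : ∀ n : ℕ, 1 ≤ n → |a| * n ≤ D) : a = 0 := by
  by_contra ha
  have ha' : 0 < |a| := abs_pos.mpr ha
  obtain ⟨n, hn⟩ := exists_nat_gt (max 1 (D / |a|))
  have h1 : 1 ≤ n := by
    have := (le_max_left 1 (D / |a|)).trans_lt hn
    exact_mod_cast this.le
  have h2 : D / |a| < n := (le_max_right 1 (D / |a|)).trans_lt hn
  have h3 : D < |a| * n := by
    have := (div_lt_iff₀ ha').mp h2
    linarith
  linarith [h n h1]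

lemma abs_le_abs_add {X Y : ℝ} : |X| ≤ |X + Y| + |Y| := by
  calc |X| = |(X + Y) + (-Y)| := by ring_nf
  _ ≤ |X + Y| + |(-Y)| := abs_add_le _ _
  _ = |X + Y| + |Y| := by rw [abs_neg]

lemma single_zero {r : ℕ} (hr : 1 ≤ r) {d B : ℝ} (h : ∀ c : ℤ, |d * (c:ℝ)^r| ≤ B) :
    d = 0 := by
  apply abs_zero_of_mul_nat_le (D := B)
  intro n hn
  have hx : (1:ℝ) ≤ (n:ℝ) := by exact_mod_cast hn
  have hxr : (n:ℝ) ≤ (n:ℝ)^r := le_self_pow₀ (by linarith) (by omega)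
  have hh := h (n : ℤ)
  rw [abs_mul] at hh
  push_cast at hh
  rw [abs_of_nonneg (a := (n:ℝ)^r) (by positivity)] at hh
  nlinarith [abs_nonneg d]

lemma pair_zero {q r : ℕ} (hr : 1 ≤ r) (hq : r + 1 ≤ q) {b d B : ℝ}
    (h : ∀ c : ℤ, |b * (c:ℝ)^q + d * (c:ℝ)^r| ≤ B) : b = 0 ∧ d = 0 := by
  have hb : b = 0 := by
    apply abs_zero_of_mul_nat_le (D := B + |d|)
    intro n hn
    have hx : (1:ℝ) ≤ (n:ℝ) := by exact_mod_cast hn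
    have hx0 : (0:ℝ) < (n:ℝ)^r := by positivity
    have h1 : |b| * (n:ℝ)^q ≤ B + |d| * (n:ℝ)^r := by
      have h2 := h (n:ℤ)
      push_cast at h2
      have h3 : |b * (n:ℝ)^q| ≤ |b * (n:ℝ)^q + d * (n:ℝ)^r| + |d * (n:ℝ)^r| :=
        abs_le_abs_add
      rw [abs_mul, abs_mul, abs_of_nonneg (a := (n:ℝ)^q) (by positivity),
        abs_of_nonneg (a := (n:ℝ)^r) (by positivity)] at h3
      linarith
    have hpow : (n:ℝ)^(r+1) ≤ (n:ℝ)^q := pow_le_pow_right₀ hx hq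
    have hB : 0 ≤ B := by
      have h0 := h 0
      have e0 : |b * ((0:ℤ):ℝ)^q + d * ((0:ℤ):ℝ)^r| = 0 := by
        simp [zero_pow (by omega : q ≠ 0), zero_pow (by omega : r ≠ 0)]
      rw [e0] at h0
      linarith
    have key : (|b| * n) * (n:ℝ)^r ≤ (B + |d|) * (n:ℝ)^r := by
      have e1 : (|b| * n) * (n:ℝ)^r = |b| * (n:ℝ)^(r+1) := by ring
      have hxr1 : (1:ℝ) ≤ (n:ℝ)^r := one_le_pow₀ hx
      nlinarith [abs_nonneg b, abs_nonneg d]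
    exact le_of_mul_le_mul_right key hx0
  subst hb
  refine ⟨rfl, single_zero hr (B := B) fun c => ?_⟩
  simpa using h c

lemma triple_zero {p q r : ℕ} (hr : 1 ≤ r) (hq : r + 1 ≤ q) (hp : q + 1 ≤ p)
    {a b d B : ℝ}
    (h : ∀ c : ℤ, |a * (c:ℝ)^p + b * (c:ℝ)^q + d * (c:ℝ)^r| ≤ B) :
    a = 0 ∧ b = 0 ∧ d = 0 := by
  have ha : a = 0 := by
    apply abs_zero_of_mul_nat_le (D := B + |b| + |d|)
    intro n hn
    have hx : (1:ℝ) ≤ (n:ℝ) := by exact_mod_cast hn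
    have hx0 : (0:ℝ) < (n:ℝ)^q := by positivity
    have h1 : |a| * (n:ℝ)^p ≤ B + |b| * (n:ℝ)^q + |d| * (n:ℝ)^r := by
      have h2 := h (n:ℤ)
      push_cast at h2
      have h3 : |a * (n:ℝ)^p| ≤ |a * (n:ℝ)^p + (b * (n:ℝ)^q + d * (n:ℝ)^r)| +
          |b * (n:ℝ)^q + d * (n:ℝ)^r| := abs_le_abs_add
      have h4 : |b * (n:ℝ)^q + d * (n:ℝ)^r| ≤ |b| * (n:ℝ)^q + |d| * (n:ℝ)^r := by
        calc |b * (n:ℝ)^q + d * (n:ℝ)^r| ≤ |b * (n:ℝ)^q| + |d * (n:ℝ)^r| := abs_add_le _ _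
        _ = |b| * (n:ℝ)^q + |d| * (n:ℝ)^r := by
            rw [abs_mul, abs_mul, abs_of_nonneg (a := (n:ℝ)^q) (by positivity),
              abs_of_nonneg (a := (n:ℝ)^r) (by positivity)]
      rw [abs_mul, abs_of_nonneg (a := (n:ℝ)^p) (by positivity)] at h3
      have h5 : a * (n:ℝ)^p + (b * (n:ℝ)^q + d * (n:ℝ)^r)
          = a * (n:ℝ)^p + b * (n:ℝ)^q + d * (n:ℝ)^r := by ring
      rw [h5] at h3
      linarith
    have hpow : (n:ℝ)^(q+1) ≤ (n:ℝ)^p := pow_le_pow_right₀ hx hp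
    have hpow2 : (n:ℝ)^r ≤ (n:ℝ)^q := pow_le_pow_right₀ hx (by omega)
    have hB : 0 ≤ B := by
      have h0 := h 0
      have e0 : |a * ((0:ℤ):ℝ)^p + b * ((0:ℤ):ℝ)^q + d * ((0:ℤ):ℝ)^r| = 0 := by
        simp [zero_pow (by omega : p ≠ 0), zero_pow (by omega : q ≠ 0),
          zero_pow (by omega : r ≠ 0)]
      rw [e0] at h0
      linarith
    have key : (|a| * n) * (n:ℝ)^q ≤ (B + |b| + |d|) * (n:ℝ)^q := by
      have e1 : (|a| * n) * (n:ℝ)^q = |a| * (n:ℝ)^(q+1) := by ring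
      have hxq1 : (1:ℝ) ≤ (n:ℝ)^q := one_le_pow₀ hx
      nlinarith [abs_nonneg a, abs_nonneg b, abs_nonneg d]
    exact le_of_mul_le_mul_right key hx0
  subst ha
  have hpair := pair_zero hr hq (b := b) (d := d) (B := B) (fun c => by simpa using h c)
  exact ⟨rfl, hpair.1, hpair.2⟩

end HW18

namespace HW18

theorem dim20_unbounded (l₄ l₅ l₆ l₇ : ℚ)
    (f₁ : ℤ → ℚ) (f₂ : ℤ → ℚ)
    (hf₁ : ∀ c : ℤ, f₁ c =
      2 ^ 7 * (c : ℚ) ^ 7 * (-3 * l₆ - 9 * l₇) +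
        2 ^ 5 * (c : ℚ) ^ 5 * (-24 * l₅ - 96 * l₆ - 240 * l₇) +
        2 ^ 3 * (c : ℚ) ^ 3 * (-28 * l₄ - 232 * l₅ - 580 * l₆ - 1056 * l₇))
    (hf₂ : ∀ c : ℤ, f₂ c =
      2 ^ 3 * (c : ℚ) ^ 3 * (-7 * l₄ - 4 * l₅ - 7 * l₆ + 52 * l₇) +
        2 ^ 2 * (c : ℚ) ^ 2 * (42 * l₅ + 66 * l₆ + 48 * l₇) +
        2 * (c : ℚ) * (224 * l₅ + 352 * l₆ + 256 * l₇))
    (hb₁ : ∃ B : ℝ, ∀ c : ℤ, ((|f₁ c| : ℚ) : ℝ) ≤ B)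
    (hb₂ : ∃ B : ℝ, ∀ c : ℤ, ((|f₂ c| : ℚ) : ℝ) ≤ B) :
    l₄ = 0 ∧ l₅ = 0 ∧ l₆ = 0 ∧ l₇ = 0 := by
  obtain ⟨B₁, hB₁⟩ := hb₁
  obtain ⟨B₂, hB₂⟩ := hb₂
  have h1 : ∀ c : ℤ,
      |((2^7 * (-3*l₆ - 9*l₇) : ℚ) : ℝ) * (c:ℝ)^7 +
        ((2^5 * (-24*l₅ - 96*l₆ - 240*l₇) : ℚ) : ℝ) * (c:ℝ)^5 +
        ((2^3 * (-28*l₄ - 232*l₅ - 580*l₆ - 1056*l₇) : ℚ) : ℝ) * (c:ℝ)^3| ≤ B₁ := by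
    intro c
    have hc := hB₁ c
    rw [hf₁ c] at hc
    push_cast at hc ⊢
    convert hc using 2
    · rfl
    · rfl
    ring
  have h2 : ∀ c : ℤ,
      |((2^3 * (-7*l₄ - 4*l₅ - 7*l₆ + 52*l₇) : ℚ) : ℝ) * (c:ℝ)^3 +
        ((2^2 * (42*l₅ + 66*l₆ + 48*l₇) : ℚ) : ℝ) * (c:ℝ)^2 +
        ((2 * (224*l₅ + 352*l₆ + 256*l₇) : ℚ) : ℝ) * (c:ℝ)^1| ≤ B₂ := by
    intro c
    have hc := hB₂ c
    rw [hf₂ c] at hc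
    push_cast at hc ⊢
    convert hc using 2
    · rfl
    · rfl
    ring
  obtain ⟨e1, e2, e3⟩ := triple_zero (by norm_num) (by norm_num) (by norm_num) h1
  obtain ⟨e4, e5, e6⟩ := triple_zero (by norm_num) (by norm_num) (by norm_num) h2
  have q1 : (2^7 * (-3*l₆ - 9*l₇) : ℚ) = 0 := by exact_mod_cast e1
  have q2 : (2^5 * (-24*l₅ - 96*l₆ - 240*l₇) : ℚ) = 0 := by exact_mod_cast e2
  have q3 : (2^3 * (-28*l₄ - 232*l₅ - 580*l₆ - 1056*l₇) : ℚ) = 0 := by exact_mod_cast e3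
  have q4 : (2^3 * (-7*l₄ - 4*l₅ - 7*l₆ + 52*l₇) : ℚ) = 0 := by exact_mod_cast e4
  have q5 : (2^2 * (42*l₅ + 66*l₆ + 48*l₇) : ℚ) = 0 := by exact_mod_cast e5
  refine ⟨by linarith, by linarith, by linarith, by linarith⟩

end HW18
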